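/- arXiv:1210.3142 — 5 statements merged into one kernel-verified Lean document; each statement's English description precedes it below -/
import Mathlib

section
/- If I ≠ ∅, the minimizer of G(x) := max{M(x;Ω_i), D(x;Θ_j) : i ∈ I, j ∈ J} over ℝⁿ is unique. -/
section Aux

variable {E : Type*} [NormedAddCommGroup E] [NormedSpace ℝ E]

/-- The supremum of distances from `x` to points of a closed ball equals
`dist x c + r`, provided a unit vector exists. -/
lemma sylvester_aux_sSup_dist (c x : E) (R : ℝ) (hR : 0 ≤ R)
    (u : E) (hu : ‖u‖ = 1) :
    sSup {d : ℝ | ∃ q ∈ Metric.closedBall c R, d = ‖x - q‖} = dist x c + R := by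
  have hub : ∀ d ∈ {d : ℝ | ∃ q ∈ Metric.closedBall c R, d = ‖x - q‖},
      d ≤ dist x c + R := by
    rintro d ⟨q, hq, rfl⟩
    rw [← dist_eq_norm]
    calc dist x q ≤ dist x c + dist c q := dist_triangle _ _ _
      _ ≤ dist x c + R := by
          have := Metric.mem_closedBall.1 hq
          rw [dist_comm] at this; linarith
  apply le_antisymm
  · exact csSup_le ⟨‖x - c‖, c, Metric.mem_closedBall_self hR, rfl⟩ hub
  · apply le_csSup ⟨dist x c + R, hub⟩
    by_cases hxc : x = c
    · refine ⟨c + R • u, ?_, ?_⟩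
      · simp [Metric.mem_closedBall, dist_eq_norm, norm_smul, abs_of_nonneg hR, hu]
      · subst hxc
        simp [dist_self, norm_smul, abs_of_nonneg hR, hu, norm_sub_rev]
    · have hd : 0 < ‖x - c‖ := by
        rw [norm_pos_iff, sub_ne_zero]; exact hxc
      set d := ‖x - c‖ with hdd
      refine ⟨c + (R / d) • (c - x), ?_, ?_⟩
      · rw [Metric.mem_closedBall, dist_eq_norm]
        have : c + (R / d) • (c - x) - c = (R / d) • (c - x) := by abel
        rw [this, norm_smul, norm_sub_rev, ← hdd, Real.norm_eq_abs,
          abs_of_nonneg (div_nonneg hR hd.le)]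
        field_simp
        exact le_rfl
      · have hxq : x - (c + (R / d) • (c - x)) = (1 + R / d) • (x - c) := by
          rw [smul_sub, add_smul, one_smul, smul_sub]
          abel
        rw [hxq, norm_smul, Real.norm_eq_abs, ← hdd,
          abs_of_nonneg (by positivity : (0:ℝ) ≤ 1 + R / d), dist_eq_norm, ← hdd]
        field_simp

/-- Formula for the distance from a point to a closed ball. -/
lemma sylvester_aux_infDist (c x : E) (R : ℝ) (hR : 0 ≤ R) :
    Metric.infDist x (Metric.closedBall c R) = max (dist x c - R) 0 := by
  by_cases hc : dist x c ≤ R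
  · rw [Metric.infDist_zero_of_mem (Metric.mem_closedBall.2 hc),
      max_eq_right (by linarith)]
  · push_neg at hc
    have hd : 0 < ‖x - c‖ := by rw [← dist_eq_norm]; linarith
    set d := ‖x - c‖ with hdd
    have hdist : dist x c = d := dist_eq_norm x c
    rw [max_eq_left (by linarith)]
    apply le_antisymm
    · have hqmem : c + (R / d) • (x - c) ∈ Metric.closedBall c R := by
        rw [Metric.mem_closedBall, dist_eq_norm]
        have : c + (R / d) • (x - c) - c = (R / d) • (x - c) := by abel
        rw [this, norm_smul, Real.norm_eq_abs, ← hdd,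
          abs_of_nonneg (div_nonneg hR hd.le)]
        field_simp
        exact le_rfl
      refine le_trans (Metric.infDist_le_dist_of_mem hqmem) ?_
      have hxq : x - (c + (R / d) • (x - c)) = (1 - R / d) • (x - c) := by
        rw [sub_smul, one_smul, smul_sub]
        abel
      have hRd : R / d ≤ 1 := by
        rw [div_le_one hd]; linarith
      rw [dist_eq_norm, hxq, norm_smul, Real.norm_eq_abs, ← hdd,
        abs_of_nonneg (by linarith), hdist]
      field_simp
      exact le_rfl
    · by_contra h
      push_neg at h
      obtain ⟨q, hq, hq2⟩ := (Metric.infDist_lt_iff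
        ⟨c, Metric.mem_closedBall_self hR⟩).1 h
      have h1 : dist x c ≤ dist x q + dist q c := dist_triangle _ _ _
      have h2 : dist q c ≤ R := Metric.mem_closedBall.1 hq
      linarith

/-- Strict convexity: two distinct points in a closed ball can't have their
midpoint at maximal distance. -/
lemma sylvester_aux_strict {F : Type*} [NormedAddCommGroup F] [NormedSpace ℝ F]
    [StrictConvexSpace ℝ F] (x y c : F) (hne : x ≠ y)
    (h1 : dist x c ≤ dist ((1/2 : ℝ) • x + (1/2 : ℝ) • y) c)
    (h2 : dist y c ≤ dist ((1/2 : ℝ) • x + (1/2 : ℝ) • y) c) : False := by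
  set R := dist ((1/2 : ℝ) • x + (1/2 : ℝ) • y) c with hRdef
  have hx : x ∈ Metric.closedBall c R := Metric.mem_closedBall.2 h1
  have hy : y ∈ Metric.closedBall c R := Metric.mem_closedBall.2 h2
  have := combo_mem_ball_of_ne hx hy hne (by norm_num : (0:ℝ) < 1/2)
    (by norm_num : (0:ℝ) < 1/2) (by norm_num)
  rw [Metric.mem_ball] at this
  exact absurd this (by rw [← hRdef]; exact lt_irrefl R)

end Aux

/-- If `I ≠ ∅`, the minimizer of the generalized Sylvester objective is unique. -/
theorem sylvester_unique_minimizer (n m k : ℕ) (hm : 0 < m)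
    (a : Fin m → EuclideanSpace ℝ (Fin n)) (r : Fin m → ℝ) (hr : ∀ i, 0 ≤ r i)
    (b : Fin k → EuclideanSpace ℝ (Fin n)) (s : Fin k → ℝ) (hs : ∀ j, 0 ≤ s j)
    (G : EuclideanSpace ℝ (Fin n) → ℝ)
    (hG : ∀ x, G x = sSup (Set.range fun p : Fin m ⊕ Fin k =>
        Sum.elim
          (fun i => sSup {d : ℝ | ∃ q ∈ Metric.closedBall (a i) (r i), d = ‖x - q‖})
          (fun j => Metric.infDist x (Metric.closedBall (b j) (s j))) p))
    (x₁ x₂ : EuclideanSpace ℝ (Fin n))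
    (h₁ : ∀ x, G x₁ ≤ G x) (h₂ : ∀ x, G x₂ ≤ G x) :
    x₁ = x₂ := by
  rcases Nat.eq_zero_or_pos n with hn | hn
  · subst hn
    haveI : Subsingleton (EuclideanSpace ℝ (Fin 0)) :=
      ⟨fun x y => by ext i; exact i.elim0⟩
    exact Subsingleton.elim x₁ x₂
  -- a unit vector
  set u : EuclideanSpace ℝ (Fin n) := EuclideanSpace.single (⟨0, hn⟩ : Fin n) (1:ℝ)
    with hu_def
  have hu : ‖u‖ = 1 := by
    rw [hu_def, EuclideanSpace.norm_single]; norm_num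
  -- the simplified component functions
  set g : Fin m ⊕ Fin k → EuclideanSpace ℝ (Fin n) → ℝ := fun p x =>
    Sum.elim (fun i => dist x (a i) + r i)
      (fun j => max (dist x (b j) - s j) 0) p with hg_def
  have hG' : ∀ x, G x = sSup (Set.range fun p => g p x) := by
    intro x
    rw [hG x]
    congr 1
    apply congrArg
    funext p
    cases p with
    | inl i => simpa [hg_def] using sylvester_aux_sSup_dist (a i) x (r i) (hr i) u hu
    | inr j => simpa [hg_def] using sylvester_aux_infDist (b j) x (s j) (hs j)
  have hle : ∀ x p, g p x ≤ G x := by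
    intro x p
    rw [hG' x]
    exact le_csSup (Set.finite_range _).bddAbove ⟨p, rfl⟩
  have hmem : ∀ x, ∃ p, G x = g p x := by
    intro x
    have hne : (Set.range fun p => g p x).Nonempty :=
      ⟨g (Sum.inl ⟨0, hm⟩) x, ⟨Sum.inl ⟨0, hm⟩, rfl⟩⟩
    obtain ⟨p, hp⟩ := hne.csSup_mem (Set.finite_range _)
    exact ⟨p, by rw [hG' x, ← hp]⟩
  by_contra hne
  have hV : G x₂ = G x₁ := le_antisymm (h₂ x₁) (h₁ x₂)
  set i0 : Fin m := ⟨0, hm⟩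
  by_cases hVpos : G x₁ ≤ 0
  · -- then all radii and distances collapse
    have hA1 : dist x₁ (a i0) + r i0 ≤ G x₁ := by simpa [hg_def] using hle x₁ (Sum.inl i0)
    have hA2 : dist x₂ (a i0) + r i0 ≤ G x₁ := by
      have := hle x₂ (Sum.inl i0); rw [hV] at this; simpa [hg_def] using this
    have h1 : dist x₁ (a i0) = 0 := le_antisymm (by have := hr i0; have := dist_nonneg (x := x₁) (y := a i0); linarith) dist_nonneg
    have h2 : dist x₂ (a i0) = 0 := le_antisymm (by have := hr i0; have := dist_nonneg (x := x₂) (y := a i0); linarith) dist_nonneg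
    rw [dist_eq_zero] at h1 h2
    exact hne (h1.trans h2.symm)
  push_neg at hVpos
  set z : EuclideanSpace ℝ (Fin n) := (1/2 : ℝ) • x₁ + (1/2 : ℝ) • x₂ with hz_def
  have hzV : G x₁ ≤ G z := h₁ z
  obtain ⟨p, hp⟩ := hmem z
  cases p with
  | inl i =>
      have hgz : dist z (a i) + r i = G z := by
        rw [hp]; simp [hg_def]
      have h1 : dist x₁ (a i) ≤ dist z (a i) := by
        have := hle x₁ (Sum.inl i)
        simp only [hg_def, Sum.elim_inl] at this
        linarith
      have h2 : dist x₂ (a i) ≤ dist z (a i) := by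
        have := hle x₂ (Sum.inl i)
        simp only [hg_def, Sum.elim_inl] at this
        rw [hV] at this
        linarith
      exact sylvester_aux_strict x₁ x₂ (a i) hne h1 h2
  | inr j =>
      have hgz : max (dist z (b j) - s j) 0 = G z := by
        rw [hp]; simp [hg_def]
      have hpos : 0 < G z := lt_of_lt_of_le hVpos hzV
      have hzb : dist z (b j) - s j = G z := by
        rcases max_cases (dist z (b j) - s j) 0 with ⟨h, _⟩ | ⟨h, _⟩
        · rw [← h, hgz]
        · rw [h] at hgz; linarith
      have h1 : dist x₁ (b j) ≤ dist z (b j) := by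
        have := hle x₁ (Sum.inr j)
        simp only [hg_def, Sum.elim_inr] at this
        have h' : dist x₁ (b j) - s j ≤ G x₁ :=
          le_trans (le_max_left _ _) this
        linarith
      have h2 : dist x₂ (b j) ≤ dist z (b j) := by
        have := hle x₂ (Sum.inr j)
        simp only [hg_def, Sum.elim_inr] at this
        rw [hV] at this
        have h' : dist x₂ (b j) - s j ≤ G x₁ :=
          le_trans (le_max_left _ _) this
        linarith
      exact sylvester_aux_strict x₁ x₂ (b j) hne h1 h2
end

section
/- Let Ω_1, Ω_2, Ω_3 be closed balls B(a_i;r_i) in ℝ² with r_i > 0. A point x̄ with active index set A(x̄) = {1} (i.e., M(x̄;Ω_1) > M(x̄;Ω_i) for i = 2,3) is the minimizer of G(x) = max_i M(x;Ω_i) if and only if x̄ = a_1, r_1 = G(x̄), and B(x̄;r_1) strictly contains Ω_2 and Ω_3 (i.e., ‖a_1−a_i‖ + r_i < r_1 for i = 2,3). -/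
/-- Characterization of the minimizer of the smallest enclosing ball problem for three balls
in the plane when the active index set is a singleton. -/
theorem three_ball_sylvester_active_singleton
    (a : Fin 3 → EuclideanSpace ℝ (Fin 2)) (r : Fin 3 → ℝ) (hr : ∀ i, 0 < r i)
    (G : EuclideanSpace ℝ (Fin 2) → ℝ)
    (hG : ∀ x, G x = sSup (Set.range fun i : Fin 3 => ‖x - a i‖ + r i))
    (xb : EuclideanSpace ℝ (Fin 2))
    (hactive : ∀ i : Fin 3, i ≠ 0 → ‖xb - a i‖ + r i < ‖xb - a 0‖ + r 0) :
    (∀ x, G xb ≤ G x) ↔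
      (xb = a 0 ∧ r 0 = G xb ∧ ∀ i : Fin 3, i ≠ 0 → ‖a 0 - a i‖ + r i < r 0) := by
  have hle : ∀ x (i : Fin 3), ‖x - a i‖ + r i ≤ G x := by
    intro x i
    rw [hG]
    exact le_csSup (Set.finite_range _).bddAbove ⟨i, rfl⟩
  have hub : ∀ x c, (∀ i : Fin 3, ‖x - a i‖ + r i ≤ c) → G x ≤ c := by
    intro x c h
    rw [hG]
    exact csSup_le (Set.range_nonempty _) (by rintro y ⟨i, rfl⟩; exact h i)
  have hGxb : G xb = ‖xb - a 0‖ + r 0 := by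
    refine le_antisymm (hub _ _ ?_) (hle _ 0)
    intro i
    by_cases hi : i = 0
    · subst hi; exact le_rfl
    · exact (hactive i hi).le
  constructor
  · intro hmin
    have hxb : xb = a 0 := by
      by_contra hne
      set d : ℝ := ‖xb - a 0‖ with hd
      have hdpos : 0 < d := by
        rw [hd, norm_pos_iff]
        exact sub_ne_zero_of_ne hne
      set δ : ℝ := min ((‖xb - a 0‖ + r 0) - (‖xb - a 1‖ + r 1))
          ((‖xb - a 0‖ + r 0) - (‖xb - a 2‖ + r 2)) with hδ
      have hδpos : 0 < δ := by
        apply lt_min <;> simp only [sub_pos]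
        · exact hactive 1 (by decide)
        · exact hactive 2 (by decide)
      set t : ℝ := δ / (2 * d + δ) with ht
      have hden : 0 < 2 * d + δ := by linarith
      have htpos : 0 < t := div_pos hδpos hden
      have htlt : t < 1 := by
        rw [ht, div_lt_one hden]; linarith
      have h2td : 2 * t * d < δ := by
        have hmul : t * (2 * d + δ) = δ := div_mul_cancel₀ _ hden.ne'
        nlinarith [mul_pos htpos hδpos]
      set x : EuclideanSpace ℝ (Fin 2) := xb + t • (a 0 - xb) with hx
      have hx0 : ‖x - a 0‖ = (1 - t) * d := by
        have : x - a 0 = (1 - t) • (xb - a 0) := by rw [hx]; module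
        rw [this, norm_smul, Real.norm_eq_abs, abs_of_nonneg (by linarith)]
      have hxi : ∀ i : Fin 3, ‖x - a i‖ ≤ ‖xb - a i‖ + t * d := by
        intro i
        have h1 : x - a i = (xb - a i) + t • (a 0 - xb) := by rw [hx]; module
        rw [h1]
        calc ‖(xb - a i) + t • (a 0 - xb)‖ ≤ ‖xb - a i‖ + ‖t • (a 0 - xb)‖ :=
              norm_add_le _ _
          _ = ‖xb - a i‖ + t * d := by
              rw [norm_smul, Real.norm_eq_abs, abs_of_nonneg htpos.le, hd,
                norm_sub_rev (a 0) xb]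
      have hGx : G x ≤ (1 - t) * d + r 0 := by
        apply hub
        intro i
        by_cases hi : i = 0
        · subst hi; rw [hx0]
        · have hδi : δ ≤ (‖xb - a 0‖ + r 0) - (‖xb - a i‖ + r i) := by
            fin_cases i
            · exact absurd rfl hi
            · exact min_le_left _ _
            · exact min_le_right _ _
          have := hxi i
          have : ‖x - a i‖ + r i ≤ ‖xb - a i‖ + t * d + r i := by linarith
          have hd' : ‖xb - a 0‖ = d := rfl
          nlinarith
      have : G x < G xb := by
        rw [hGxb]
        have : (1 - t) * d < d := by nlinarith
        linarith
      exact absurd (hmin x) (not_le.mpr this)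
    refine ⟨hxb, ?_, ?_⟩
    · rw [hGxb, hxb, sub_self, norm_zero, zero_add]
    · intro i hi
      have := hactive i hi
      rw [hxb] at this
      simpa using this
  · rintro ⟨hxb, hr0, _⟩
    intro x
    have h1 : G xb = r 0 := by
      rw [hGxb, hxb, sub_self, norm_zero, zero_add]
    have h2 : ‖x - a 0‖ + r 0 ≤ G x := hle x 0
    have h3 : (0:ℝ) ≤ ‖x - a 0‖ := norm_nonneg _
    linarith
end

section
/- Suppose x* minimizes H(x) = Σ_{i=1}^3 D(x;Θ_i) over ℝ² and x* lies in none of the balls Θ_1, Θ_2, Θ_3. Then x* is the unique minimizer of the classical Fermat–Torricelli function F(x) = Σ_{i=1}^3 ‖x−b_i‖, where b_i are the centers; conversely, if the Fermat–Torricelli point of b_1,b_2,b_3 lies outside all three balls and minimizes H, the two problems have the same minimizer. -/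
open Metric

local notation "E2" => EuclideanSpace ℝ (Fin 2)

lemma infDist_cb (x c : E2) (s : ℝ) (hs : 0 ≤ s) :
    infDist x (closedBall c s) = max (dist x c - s) 0 := by
  rcases le_or_gt (dist x c) s with h | h
  · rw [infDist_zero_of_mem (mem_closedBall.2 h), max_eq_right (by linarith)]
  · rw [max_eq_left (by linarith)]
    apply le_antisymm
    · set d := dist x c with hd
      have hd0 : 0 < d := lt_of_le_of_lt hs h
      set y : E2 := c + (s/d) • (x - c) with hy
      have hyc : dist y c = s := by
        rw [dist_eq_norm]
        have h1 : y - c = (s/d) • (x - c) := by rw [hy]; abel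
        rw [h1, norm_smul, Real.norm_eq_abs, abs_of_nonneg (by positivity), ← dist_eq_norm,
          ← hd]
        field_simp
      have hym : y ∈ closedBall c s := mem_closedBall.2 hyc.le
      have hxy : dist x y = d - s := by
        rw [dist_eq_norm]
        have h2 : x - y = (1 - s/d) • (x - c) := by rw [hy]; module
        rw [h2, norm_smul, Real.norm_eq_abs,
          abs_of_nonneg (by rw [sub_nonneg]; exact div_le_one_of_le₀ h.le hd0.le), ← dist_eq_norm, ← hd]
        field_simp
      calc infDist x (closedBall c s) ≤ dist x y := infDist_le_dist_of_mem hym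
        _ = d - s := hxy
    · by_contra hcon
      push_neg at hcon
      obtain ⟨y, hy, hlt⟩ := (infDist_lt_iff ⟨c, mem_closedBall_self hs⟩).1 hcon
      have htri := dist_triangle x y c
      rw [mem_closedBall] at hy
      linarith

lemma norm_combo (u v : E2) (t : ℝ) (h0 : 0 ≤ t) (h1 : t ≤ 1) :
    ‖(1-t) • u + t • v‖ ≤ (1-t) * ‖u‖ + t * ‖v‖ := by
  calc ‖(1-t)•u + t•v‖ ≤ ‖(1-t)•u‖ + ‖t•v‖ := norm_add_le _ _
    _ = (1-t)*‖u‖ + t*‖v‖ := by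
        rw [norm_smul, norm_smul, Real.norm_eq_abs, Real.norm_eq_abs,
          abs_of_nonneg (by linarith), abs_of_nonneg h0]

lemma max_combo (a a1 a2 s t : ℝ) (h0 : 0 ≤ t) (h1 : t ≤ 1) (h : a ≤ (1-t)*a1 + t*a2) :
    max (a - s) 0 ≤ (1-t) * max (a1 - s) 0 + t * max (a2 - s) 0 := by
  apply max_le
  · have g1 : (1-t) * (a1 - s) ≤ (1-t) * max (a1 - s) 0 :=
      mul_le_mul_of_nonneg_left (le_max_left _ _) (by linarith)
    have g2 : t * (a2 - s) ≤ t * max (a2 - s) 0 :=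
      mul_le_mul_of_nonneg_left (le_max_left _ _) h0
    nlinarith
  · have g1 : (0:ℝ) ≤ (1-t) * max (a1 - s) 0 :=
      mul_nonneg (by linarith) (le_max_right _ _)
    have g2 : (0:ℝ) ≤ t * max (a2 - s) 0 := mul_nonneg h0 (le_max_right _ _)
    linarith

lemma seg_id (z x c : E2) (t : ℝ) : (z + t • (x - z)) - c = (1-t) • (z - c) + t • (x - c) := by
  module

lemma F_seg (b : Fin 3 → E2) (z x : E2) (t : ℝ) (h0 : 0 ≤ t) (h1 : t ≤ 1) :
    ∑ i : Fin 3, ‖(z + t • (x - z)) - b i‖ ≤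
      (1-t) * ∑ i : Fin 3, ‖z - b i‖ + t * ∑ i : Fin 3, ‖x - b i‖ := by
  rw [Finset.mul_sum, Finset.mul_sum, ← Finset.sum_add_distrib]
  apply Finset.sum_le_sum
  intro i _
  rw [seg_id]
  exact norm_combo _ _ _ h0 h1

lemma H_seg (b : Fin 3 → E2) (s : Fin 3 → ℝ) (hs : ∀ i, 0 ≤ s i) (z x : E2) (t : ℝ)
    (h0 : 0 ≤ t) (h1 : t ≤ 1) :
    ∑ i : Fin 3, infDist (z + t • (x - z)) (closedBall (b i) (s i)) ≤
      (1-t) * ∑ i : Fin 3, infDist z (closedBall (b i) (s i)) +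
        t * ∑ i : Fin 3, infDist x (closedBall (b i) (s i)) := by
  rw [Finset.mul_sum, Finset.mul_sum, ← Finset.sum_add_distrib]
  apply Finset.sum_le_sum
  intro i _
  rw [infDist_cb _ _ _ (hs i), infDist_cb _ _ _ (hs i), infDist_cb _ _ _ (hs i)]
  apply max_combo _ _ _ _ _ h0 h1
  rw [dist_eq_norm, dist_eq_norm, dist_eq_norm, seg_id]
  exact norm_combo _ _ _ h0 h1

lemma Fmin_of_local (b : Fin 3 → E2) (xs : E2) (ε : ℝ) (hε : 0 < ε)
    (hloc : ∀ y : E2, dist y xs < ε → ∑ i : Fin 3, ‖xs - b i‖ ≤ ∑ i : Fin 3, ‖y - b i‖)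
    (x : E2) : ∑ i : Fin 3, ‖xs - b i‖ ≤ ∑ i : Fin 3, ‖x - b i‖ := by
  rcases eq_or_ne x xs with rfl | hne
  · exact le_refl _
  have hd : 0 < dist x xs := dist_pos.2 hne
  set d := dist x xs with hdd
  set t := min (1/2 : ℝ) (ε / (2*d)) with ht
  have ht0 : 0 < t := lt_min (by norm_num) (by positivity)
  have ht1 : t ≤ 1 := (min_le_left _ _).trans (by norm_num)
  have hdy : dist (xs + t • (x - xs)) xs = t * d := by
    rw [dist_eq_norm, add_sub_cancel_left, norm_smul, Real.norm_eq_abs, abs_of_pos ht0,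
      ← dist_eq_norm]
  have hdyε : dist (xs + t • (x - xs)) xs < ε := by
    have h2 : t ≤ ε / (2*d) := min_le_right _ _
    have h3 : t * d ≤ (ε / (2*d)) * d := mul_le_mul_of_nonneg_right h2 hd.le
    have h4 : (ε / (2*d)) * d = ε/2 := by field_simp
    rw [hdy]; linarith
  have h1 := hloc _ hdyε
  have h2 := F_seg b xs x t ht0.le ht1
  have h6 : (1-t) * (∑ i : Fin 3, ‖xs - b i‖) + t * (∑ i : Fin 3, ‖x - b i‖)
      = (∑ i : Fin 3, ‖xs - b i‖) - t * (∑ i : Fin 3, ‖xs - b i‖)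
        + t * (∑ i : Fin 3, ‖x - b i‖) := by ring
  by_contra hc
  push_neg at hc
  have h5 : t * (∑ i : Fin 3, ‖x - b i‖) < t * (∑ i : Fin 3, ‖xs - b i‖) :=
    mul_lt_mul_of_pos_left hc ht0
  linarith

lemma exists_eps (b : Fin 3 → E2) (s : Fin 3 → ℝ) (z : E2) (h : ∀ i, s i < dist z (b i)) :
    ∃ ε > 0, ∀ y : E2, dist y z < ε → ∀ i, s i < dist y (b i) := by
  refine ⟨min (min (dist z (b 0) - s 0) (dist z (b 1) - s 1)) (dist z (b 2) - s 2), ?_, ?_⟩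
  · simp only [lt_min_iff]
    exact ⟨⟨by linarith [h 0], by linarith [h 1]⟩, by linarith [h 2]⟩
  · intro y hy i
    have htri : dist z (b i) ≤ dist y z + dist y (b i) := by
      rw [dist_comm y z]; exact dist_triangle z y (b i)
    have hεi : min (min (dist z (b 0) - s 0) (dist z (b 1) - s 1)) (dist z (b 2) - s 2)
        ≤ dist z (b i) - s i := by
      fin_cases i
      · exact (min_le_left _ _).trans (min_le_left _ _)
      · exact (min_le_left _ _).trans (min_le_right _ _)
      · exact min_le_right _ _
    linarith

lemma oneD (a b c : ℝ)
    (hmin : ∀ t : ℝ, |0 - a| + |0 - b| + |0 - c| ≤ |t - a| + |t - b| + |t - c|)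
    (h1 : |1 - a| + |1 - b| + |1 - c| = |0 - a| + |0 - b| + |0 - c|) : False := by
  have habs : ∀ (t x : ℝ), 0 ≤ t → t ≤ 1 → |t - x| ≤ (1-t) * |0 - x| + t * |1 - x| := by
    intro t x h0 h1'
    have he : t - x = (1-t) * (0 - x) + t * (1 - x) := by ring
    rw [he]
    calc |(1-t)*(0-x) + t*(1-x)| ≤ |(1-t)*(0-x)| + |t*(1-x)| := abs_add_le _ _
      _ = (1-t)*|0-x| + t*|1-x| := by
          rw [abs_mul, abs_mul, abs_of_nonneg (by linarith), abs_of_nonneg h0]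
  have heq : ∀ t : ℝ, 0 ≤ t → t ≤ 1 →
      |t - a| + |t - b| + |t - c| = |0 - a| + |0 - b| + |0 - c| := by
    intro t h0 h1'
    have ha := habs t a h0 h1'
    have hb := habs t b h0 h1'
    have hc := habs t c h0 h1'
    have hle : |t - a| + |t - b| + |t - c| ≤ |0 - a| + |0 - b| + |0 - c| := by nlinarith
    exact le_antisymm hle (hmin t)
  have hnn : ∀ x : ℝ, 0 ≤ |1/4 - x| + |3/4 - x| - 2 * |1/2 - x| := by
    intro x
    have h1' := abs_add_le (1/4 - x) (3/4 - x)
    have h2 : |(1/4 - x) + (3/4 - x)| = 2 * |1/2 - x| := by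
      rw [show (1/4 - x) + (3/4 - x) = 2 * (1/2 - x) by ring, abs_mul]
      norm_num
    linarith
  have hout : ∀ x : ℝ, |1/4 - x| + |3/4 - x| - 2 * |1/2 - x| = 0 → (x ≤ 1/4 ∨ 3/4 ≤ x) := by
    intro x hx
    by_contra hcon
    push_neg at hcon
    obtain ⟨hx1, hx2⟩ := hcon
    rw [abs_of_nonpos (by linarith), abs_of_nonneg (by linarith)] at hx
    rcases abs_cases (1/2 - x) with ⟨h, _⟩ | ⟨h, _⟩ <;> linarith
  have e1 := heq (1/4) (by norm_num) (by norm_num)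
  have e2 := heq (1/2) (by norm_num) (by norm_num)
  have e3 := heq (3/4) (by norm_num) (by norm_num)
  have houta := hout a (by linarith [hnn a, hnn b, hnn c])
  have houtb := hout b (by linarith [hnn a, hnn b, hnn c])
  have houtc := hout c (by linarith [hnn a, hnn b, hnn c])
  have hsgn : ∀ x : ℝ, (x ≤ 1/4 ∨ 3/4 ≤ x) →
      |5/8 - x| - |3/8 - x| = 1/4 ∨ |5/8 - x| - |3/8 - x| = -(1/4) := by
    intro x hx
    rcases hx with h | h
    · left; rw [abs_of_nonneg (by linarith), abs_of_nonneg (by linarith)]; ring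
    · right; rw [abs_of_nonpos (by linarith), abs_of_nonpos (by linarith)]; ring
  have e38 := heq (3/8) (by norm_num) (by norm_num)
  have e58 := heq (5/8) (by norm_num) (by norm_num)
  rcases hsgn a houta with ha | ha <;> rcases hsgn b houtb with hb | hb <;>
    rcases hsgn c houtc with hc | hc <;> linarith

lemma line_param (xs y bi : E2) (hne : y ≠ xs) (hray : SameRay ℝ (xs - bi) (y - bi)) :
    ∃ t : ℝ, bi - xs = t • (y - xs) := by
  rcases hray with h | h | ⟨r, r', hr, hr', hrr⟩
  · refine ⟨0, ?_⟩
    rw [sub_eq_zero] at h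
    rw [← h, sub_self, zero_smul]
  · refine ⟨1, ?_⟩
    rw [sub_eq_zero] at h
    rw [← h, one_smul]
  · have key : (r' - r) • (bi - xs) = r' • (y - xs) := by
      have h2 : r' • (y - bi) - r • (xs - bi) = 0 := by rw [hrr, sub_self]
      calc (r' - r) • (bi - xs)
          = r' • (y - xs) - (r' • (y - bi) - r • (xs - bi)) := by module
        _ = r' • (y - xs) := by rw [h2, sub_zero]
    rcases eq_or_ne r' r with heq | hne'
    · exfalso
      rw [heq, sub_self, zero_smul] at key
      have : y - xs = 0 := by
        rcases smul_eq_zero.1 key.symm with h | h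
        · exact absurd h (ne_of_gt hr)
        · exact h
      exact hne (sub_eq_zero.1 this)
    · refine ⟨(r' - r)⁻¹ * r', ?_⟩
      have h3 := congrArg (fun w => (r' - r)⁻¹ • w) key
      simpa [smul_smul, inv_mul_cancel₀ (sub_ne_zero.2 hne')] using h3

lemma F_unique (b : Fin 3 → E2) (xs y : E2)
    (hxs : ∀ x : E2, ∑ i : Fin 3, ‖xs - b i‖ ≤ ∑ i : Fin 3, ‖x - b i‖)
    (hy : ∀ x : E2, ∑ i : Fin 3, ‖y - b i‖ ≤ ∑ i : Fin 3, ‖x - b i‖) : y = xs := by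
  by_contra hne
  have hFy : ∑ i : Fin 3, ‖y - b i‖ = ∑ i : Fin 3, ‖xs - b i‖ := le_antisymm (hy xs) (hxs y)
  set m : E2 := ((1:ℝ)/2) • (xs + y) with hm
  have hmid : ∀ i : Fin 3, m - b i = ((1:ℝ)/2) • ((xs - b i) + (y - b i)) := by
    intro i; rw [hm]; module
  have hmle : ∀ i : Fin 3, ‖m - b i‖ ≤ (‖xs - b i‖ + ‖y - b i‖)/2 := by
    intro i
    rw [hmid i, norm_smul, Real.norm_eq_abs, abs_of_nonneg (by norm_num : (0:ℝ) ≤ 1/2)]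
    have := norm_add_le (xs - b i) (y - b i)
    linarith
  have heqi : ∀ i : Fin 3, ‖m - b i‖ = (‖xs - b i‖ + ‖y - b i‖)/2 := by
    have h1 := hxs m
    simp only [Fin.sum_univ_three] at h1 hFy
    have e0 := hmle 0; have e1 := hmle 1; have e2 := hmle 2
    have q0 : ‖m - b 0‖ = (‖xs - b 0‖ + ‖y - b 0‖)/2 := by linarith
    have q1 : ‖m - b 1‖ = (‖xs - b 1‖ + ‖y - b 1‖)/2 := by linarith
    have q2 : ‖m - b 2‖ = (‖xs - b 2‖ + ‖y - b 2‖)/2 := by linarith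
    intro i
    fin_cases i
    · exact q0
    · exact q1
    · exact q2
  have hray : ∀ i : Fin 3, SameRay ℝ (xs - b i) (y - b i) := by
    intro i
    apply sameRay_iff_norm_add.mpr
    have h1 := heqi i
    rw [hmid i, norm_smul, Real.norm_eq_abs, abs_of_nonneg (by norm_num : (0:ℝ) ≤ 1/2)] at h1
    linarith
  have hline : ∀ i : Fin 3, ∃ t : ℝ, b i - xs = t • (y - xs) := fun i =>
    line_param xs y (b i) hne (hray i)
  choose tt htt using hline
  set v : E2 := y - xs with hv
  have hvne : v ≠ 0 := sub_ne_zero.2 hne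
  have hc : 0 < ‖v‖ := norm_pos_iff.2 hvne
  have hnorm : ∀ (t : ℝ) (i : Fin 3), ‖(xs + t • v) - b i‖ = |t - tt i| * ‖v‖ := by
    intro t i
    have h4 : (xs + t • v) - b i = t • v - (b i - xs) := by abel
    rw [h4, htt i, ← sub_smul, norm_smul, Real.norm_eq_abs]
  have hg0 : ∀ i : Fin 3, ‖xs - b i‖ = |0 - tt i| * ‖v‖ := by
    intro i
    have := hnorm 0 i
    simpa using this
  have hg1 : ∀ i : Fin 3, ‖y - b i‖ = |1 - tt i| * ‖v‖ := by
    intro i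
    have := hnorm 1 i
    rw [one_smul, hv, add_sub_cancel] at this
    exact this
  apply oneD (tt 0) (tt 1) (tt 2)
  · intro t
    have h5 := hxs (xs + t • v)
    simp only [Fin.sum_univ_three] at h5
    rw [hnorm t 0, hnorm t 1, hnorm t 2, hg0 0, hg0 1, hg0 2] at h5
    have h6 : (|0 - tt 0| + |0 - tt 1| + |0 - tt 2|) * ‖v‖
        ≤ (|t - tt 0| + |t - tt 1| + |t - tt 2|) * ‖v‖ := by linarith [h5]
    exact le_of_mul_le_mul_right h6 hc
  · have h5 := hFy
    simp only [Fin.sum_univ_three] at h5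
    rw [hg1 0, hg1 1, hg1 2, hg0 0, hg0 1, hg0 2] at h5
    have h6 : (|1 - tt 0| + |1 - tt 1| + |1 - tt 2|) * ‖v‖
        = (|0 - tt 0| + |0 - tt 1| + |0 - tt 2|) * ‖v‖ := by linarith [h5]
    exact mul_right_cancel₀ (ne_of_gt hc) h6

/-- A minimizer of the generalized Fermat–Torricelli objective lying outside all three
balls is the unique classical Fermat–Torricelli point of the centers; conversely, if the
Fermat–Torricelli point of the centers lies outside all balls and minimizes `H`, the two
problems have the same minimizers. -/
theorem fermat_torricelli_outside_balls
    (b : Fin 3 → EuclideanSpace ℝ (Fin 2)) (s : Fin 3 → ℝ) (hs : ∀ i, 0 ≤ s i)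
    (hb : Function.Injective b)
    (H F : EuclideanSpace ℝ (Fin 2) → ℝ)
    (hH : ∀ x, H x = ∑ i : Fin 3, Metric.infDist x (Metric.closedBall (b i) (s i)))
    (hF : ∀ x, F x = ∑ i : Fin 3, ‖x - b i‖) :
    (∀ xs : EuclideanSpace ℝ (Fin 2), (∀ x, H xs ≤ H x) →
        (∀ i, xs ∉ Metric.closedBall (b i) (s i)) →
        (∀ x, F xs ≤ F x) ∧ (∀ y, (∀ x, F y ≤ F x) → y = xs)) ∧
    (∀ z : EuclideanSpace ℝ (Fin 2), (∀ x, F z ≤ F x) →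
        (∀ i, z ∉ Metric.closedBall (b i) (s i)) → (∀ x, H z ≤ H x) →
        {x | ∀ y, H x ≤ H y} = {x | ∀ y, F x ≤ F y}) := by
  have part1 : ∀ xs : EuclideanSpace ℝ (Fin 2), (∀ x, H xs ≤ H x) →
      (∀ i, xs ∉ Metric.closedBall (b i) (s i)) →
      (∀ x, F xs ≤ F x) ∧ (∀ y, (∀ x, F y ≤ F x) → y = xs) := by
    intro xs hHmin hout
    have hdist : ∀ i, s i < dist xs (b i) := by
      intro i
      have h := hout i
      simp only [Metric.mem_closedBall, not_le] at h
      exact h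
    obtain ⟨ε, hε, hεp⟩ := exists_eps b s xs hdist
    have hHF : ∀ w : EuclideanSpace ℝ (Fin 2), (∀ i, s i < dist w (b i)) →
        H w = F w - (s 0 + s 1 + s 2) := by
      intro w hw
      rw [hH w, hF w, Fin.sum_univ_three, Fin.sum_univ_three,
        infDist_cb _ _ _ (hs 0), infDist_cb _ _ _ (hs 1), infDist_cb _ _ _ (hs 2),
        max_eq_left (by linarith [hw 0]), max_eq_left (by linarith [hw 1]),
        max_eq_left (by linarith [hw 2]),
        ← dist_eq_norm, ← dist_eq_norm, ← dist_eq_norm]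
      ring
    have hloc : ∀ y : EuclideanSpace ℝ (Fin 2), dist y xs < ε →
        ∑ i : Fin 3, ‖xs - b i‖ ≤ ∑ i : Fin 3, ‖y - b i‖ := by
      intro y hy
      have h1 := hHmin y
      have h2 := hHF xs hdist
      have h3 := hHF y (hεp y hy)
      have h4 : F xs ≤ F y := by linarith
      rwa [hF xs, hF y] at h4
    have hFmin : ∀ x, F xs ≤ F x := by
      intro x
      rw [hF xs, hF x]
      exact Fmin_of_local b xs ε hε hloc x
    refine ⟨hFmin, ?_⟩
    intro y hy
    apply F_unique b xs y
    · intro x; have h := hFmin x; rwa [hF xs, hF x] at h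
    · intro x; have h := hy x; rwa [hF y, hF x] at h
  refine ⟨part1, ?_⟩
  intro z hFz hzout hHz
  obtain ⟨hFz', huniq⟩ := part1 z hHz hzout
  have hdistz : ∀ i, s i < dist z (b i) := by
    intro i
    have h := hzout i
    simp only [Metric.mem_closedBall, not_le] at h
    exact h
  obtain ⟨ε, hε, hεp⟩ := exists_eps b s z hdistz
  ext x
  simp only [Set.mem_setOf_eq]
  constructor
  · intro hxH
    have hxz : x = z := by
      by_contra hne
      have hd : 0 < dist x z := dist_pos.2 hne
      set t := min (1/2 : ℝ) (ε / (2 * dist x z)) with ht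
      have ht0 : 0 < t := lt_min (by norm_num) (by positivity)
      have ht1 : t ≤ 1 := (min_le_left _ _).trans (by norm_num)
      have hdw : dist (z + t • (x - z)) z < ε := by
        rw [dist_eq_norm, add_sub_cancel_left, norm_smul, Real.norm_eq_abs, abs_of_pos ht0,
          ← dist_eq_norm]
        have h2 : t ≤ ε / (2 * dist x z) := min_le_right _ _
        have h3 : t * dist x z ≤ (ε / (2 * dist x z)) * dist x z :=
          mul_le_mul_of_nonneg_right h2 hd.le
        have h4 : (ε / (2 * dist x z)) * dist x z = ε / 2 := by field_simp
        linarith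
      have hwout : ∀ i, (z + t • (x - z)) ∉ Metric.closedBall (b i) (s i) := by
        intro i
        simp only [Metric.mem_closedBall, not_le]
        exact hεp _ hdw i
      have hHxz : H x = H z := le_antisymm (hxH z) (hHz x)
      have hHw : ∀ u, H (z + t • (x - z)) ≤ H u := by
        intro u
        have hseg := H_seg b s hs z x t ht0.le ht1
        have h5 : H (z + t • (x - z)) ≤ (1-t) * H z + t * H x := by
          rw [hH (z + t • (x - z)), hH z, hH x]
          exact hseg
        have h6 : H (z + t • (x - z)) ≤ H z := by
          rw [hHxz] at h5
          nlinarith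
        exact h6.trans (hHz u)
      obtain ⟨_, huniqw⟩ := part1 (z + t • (x - z)) hHw hwout
      have hzw := huniqw z hFz
      have h7 : t • (x - z) = 0 := by
        have h8 := congrArg (fun u : EuclideanSpace ℝ (Fin 2) => u - z) hzw
        simpa using h8.symm
      rcases smul_eq_zero.1 h7 with h | h
      · exact absurd h (ne_of_gt ht0)
      · exact hne (by rw [← sub_eq_zero]; exact h)
    rw [hxz]
    exact hFz
  · intro hxF
    rw [huniq x hxF]
    exact hHz
end

section
/- Suppose the solution set S of minimizing H(x) = Σ_{i=1}^3 D(x;Θ_i) over ℝ² contains a point x* lying outside all three balls Θ_1, Θ_2, Θ_3. Then S = {x*}, i.e., the minimizer is unique. -/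
open Metric

lemma infDist_closedBall_eq {E : Type*} [NormedAddCommGroup E] [NormedSpace ℝ E]
    (x c : E) {r : ℝ} (hr : 0 ≤ r) :
    Metric.infDist x (Metric.closedBall c r) = max (dist x c - r) 0 := by
  rcases le_or_gt (dist x c) r with h | h
  · rw [Metric.infDist_zero_of_mem (Metric.mem_closedBall.2 h)]
    rw [max_eq_right (sub_nonpos.2 h)]
  · have hd : 0 < dist x c := lt_of_le_of_lt hr h
    have hmax : max (dist x c - r) 0 = dist x c - r :=
      max_eq_left (by linarith)
    rw [hmax]
    apply le_antisymm
    · set q := c + (r / dist x c) • (x - c) with hq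
      have hdist : dist x c = ‖x - c‖ := dist_eq_norm x c
      have hqmem : q ∈ Metric.closedBall c r := by
        rw [Metric.mem_closedBall, dist_eq_norm]
        have : q - c = (r / dist x c) • (x - c) := by rw [hq]; abel
        rw [this, norm_smul, Real.norm_eq_abs, abs_of_nonneg (div_nonneg hr hd.le),
          ← hdist, div_mul_cancel₀ _ hd.ne']
      have hxq : dist x q = dist x c - r := by
        have : x - q = (1 - r / dist x c) • (x - c) := by
          rw [hq, sub_smul, one_smul]; abel
        rw [dist_eq_norm, this, norm_smul, Real.norm_eq_abs,
          abs_of_nonneg (by rw [sub_nonneg]; exact div_le_one_of_le₀ h.le hd.le),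
          ← hdist]
        field_simp
      calc Metric.infDist x (Metric.closedBall c r) ≤ dist x q :=
            Metric.infDist_le_dist_of_mem hqmem
        _ = dist x c - r := hxq
    · rw [Metric.infDist_eq_iInf]
      have : Nonempty (Metric.closedBall c r) := ⟨⟨c, Metric.mem_closedBall_self hr⟩⟩
      apply le_ciInf
      intro y
      have hy : dist (y : E) c ≤ r := Metric.mem_closedBall.1 y.2
      have := dist_triangle x (y : E) c
      linarith

/-- If the solution set of the generalized Fermat–Torricelli problem contains a point
lying outside all three balls, then that point is the unique minimizer. -/
theorem fermat_torricelli_unique_of_outside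
    (b : Fin 3 → EuclideanSpace ℝ (Fin 2)) (s : Fin 3 → ℝ) (hs : ∀ i, 0 ≤ s i)
    (hb : Function.Injective b)
    (H : EuclideanSpace ℝ (Fin 2) → ℝ)
    (hH : ∀ x, H x = ∑ i : Fin 3, Metric.infDist x (Metric.closedBall (b i) (s i)))
    (xs : EuclideanSpace ℝ (Fin 2)) (hmin : ∀ x, H xs ≤ H x)
    (hout : ∀ i, xs ∉ Metric.closedBall (b i) (s i)) :
    {x | ∀ y, H x ≤ H y} = {xs} := by
  have hH' : ∀ x, H x = ∑ i : Fin 3, max (dist x (b i) - s i) 0 := by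
    intro x
    rw [hH x]
    exact Finset.sum_congr rfl fun i _ => infDist_closedBall_eq x (b i) (hs i)
  -- strict outside
  have hout' : ∀ i, s i < dist xs (b i) := fun i => by
    have := hout i
    rw [Metric.mem_closedBall] at this
    linarith [not_le.1 this]
  -- convexity inequality for H
  have hconv : ∀ (a c : ℝ) (p w : EuclideanSpace ℝ (Fin 2)), 0 ≤ a → 0 ≤ c → a + c = 1 →
      H (a • p + c • w) ≤ a * H p + c * H w := by
    intro a c p w ha hc hac
    rw [hH', hH', hH', Finset.mul_sum, Finset.mul_sum, ← Finset.sum_add_distrib]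
    apply Finset.sum_le_sum
    intro i _
    obtain rfl : a = 1 - c := by linarith
    have hdist : dist ((1 - c) • p + c • w) (b i) ≤ (1 - c) * dist p (b i) + c * dist w (b i) := by
      have h1 : (1 - c) • p + c • w - b i = (1 - c) • (p - b i) + c • (w - b i) := by
        module
      rw [dist_eq_norm, dist_eq_norm, dist_eq_norm, h1]
      calc ‖(1 - c) • (p - b i) + c • (w - b i)‖ ≤ ‖(1 - c) • (p - b i)‖ + ‖c • (w - b i)‖ :=
            norm_add_le _ _
        _ = (1 - c) * ‖p - b i‖ + c * ‖w - b i‖ := by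
            rw [norm_smul, norm_smul, Real.norm_eq_abs, Real.norm_eq_abs,
              abs_of_nonneg ha, abs_of_nonneg hc]
    apply max_le
    · have h2 : (1 - c) * (dist p (b i) - s i) ≤ (1 - c) * max (dist p (b i) - s i) 0 :=
        mul_le_mul_of_nonneg_left (le_max_left _ _) ha
      have h3 : c * (dist w (b i) - s i) ≤ c * max (dist w (b i) - s i) 0 :=
        mul_le_mul_of_nonneg_left (le_max_left _ _) hc
      have hsi : (1 - c) * s i + c * s i = s i := by ring
      linarith
    · positivity
  -- main argument
  ext x
  simp only [Set.mem_setOf_eq, Set.mem_singleton_iff]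
  constructor
  · intro hx
    by_contra hne
    have hHx : H x = H xs := le_antisymm (hx xs) (hmin x)
    set v : EuclideanSpace ℝ (Fin 2) := x - xs with hv
    have hvne : v ≠ 0 := sub_ne_zero.2 hne
    have hvnorm : 0 < ‖v‖ := norm_pos_iff.2 hvne
    set ε : ℝ := min (min (dist xs (b 0) - s 0) (dist xs (b 1) - s 1)) (dist xs (b 2) - s 2)
      with hε
    have hεpos : 0 < ε := by
      have h0 := hout' 0; have h1 := hout' 1; have h2 := hout' 2
      simp only [hε, lt_min_iff]
      constructor; constructor <;> linarith
      linarith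
    have hεle : ∀ i, ε ≤ dist xs (b i) - s i := by
      intro i
      fin_cases i
      · exact le_trans (min_le_left _ _) (min_le_left _ _)
      · exact le_trans (min_le_left _ _) (min_le_right _ _)
      · exact min_le_right _ _
    set t : ℝ := min 1 (ε / (2 * ‖v‖)) with ht
    have htpos : 0 < t := lt_min one_pos (by positivity)
    have htle1 : t ≤ 1 := min_le_left _ _
    have htv : t * ‖v‖ < ε := by
      have : t ≤ ε / (2 * ‖v‖) := min_le_right _ _
      have h2 : t * ‖v‖ ≤ ε / (2 * ‖v‖) * ‖v‖ := by nlinarith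
      have h3 : ε / (2 * ‖v‖) * ‖v‖ = ε / 2 := by field_simp
      linarith
    -- points on the segment are strictly outside the balls
    have houtside : ∀ u : ℝ, 0 ≤ u → u ≤ t → ∀ i, s i < dist (xs + u • v) (b i) := by
      intro u hu hut i
      have h1 : dist (xs + u • v) xs = u * ‖v‖ := by
        rw [dist_eq_norm, show xs + u • v - xs = u • v by abel, norm_smul,
          Real.norm_eq_abs, abs_of_nonneg hu]
      have h2 : dist xs (b i) ≤ dist xs (xs + u • v) + dist (xs + u • v) (b i) :=
        dist_triangle _ _ _
      rw [dist_comm xs (xs + u • v), h1] at h2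
      have h3 : u * ‖v‖ ≤ t * ‖v‖ := by nlinarith
      have := hεle i
      linarith
    -- H is constant on the segment
    have hcomb : ∀ u : ℝ, 0 ≤ u → u ≤ 1 → xs + u • v = (1 - u) • xs + u • x := by
      intro u _ _
      rw [hv]
      module
    have hHseg : ∀ u : ℝ, 0 ≤ u → u ≤ t → H (xs + u • v) = H xs := by
      intro u hu hut
      have hu1 : u ≤ 1 := le_trans hut htle1
      apply le_antisymm
      · rw [hcomb u hu hu1]
        calc H ((1 - u) • xs + u • x) ≤ (1 - u) * H xs + u * H x :=
              hconv _ _ _ _ (by linarith) hu (by ring)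
          _ = H xs := by rw [hHx]; ring
      · exact hmin _
    set q : EuclideanSpace ℝ (Fin 2) := xs + t • v with hqdef
    set m : EuclideanSpace ℝ (Fin 2) := xs + (t / 2) • v with hmdef
    have hHq : H q = H xs := hHseg t htpos.le le_rfl
    have hHm : H m = H xs := hHseg (t / 2) (by linarith) (by linarith)
    -- F values
    have hFout : ∀ y : EuclideanSpace ℝ (Fin 2), (∀ i, s i < dist y (b i)) →
        H y = ∑ i : Fin 3, dist y (b i) - ∑ i : Fin 3, s i := by
      intro y hy
      rw [hH' y, ← Finset.sum_sub_distrib]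
      apply Finset.sum_congr rfl
      intro i _
      exact max_eq_left (by linarith [hy i])
    have hyxs : ∀ i, s i < dist xs (b i) := hout'
    have hyq : ∀ i, s i < dist q (b i) := houtside t htpos.le le_rfl
    have hym : ∀ i, s i < dist m (b i) := houtside (t / 2) (by linarith) (by linarith)
    have hFxs := hFout xs hyxs
    have hFq := hFout q hyq
    have hFm := hFout m hym
    have hFqe : ∑ i : Fin 3, dist q (b i) = ∑ i : Fin 3, dist xs (b i) := by
      have := hHq; rw [hFq, hFxs] at this; linarith
    have hFme : ∑ i : Fin 3, dist m (b i) = ∑ i : Fin 3, dist xs (b i) := by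
      have := hHm; rw [hFm, hFxs] at this; linarith
    -- midpoint inequality per coordinate
    have hmid : m = (1/2 : ℝ) • xs + (1/2 : ℝ) • q := by
      rw [hqdef, hmdef]
      module
    have hmidle : ∀ i, dist m (b i) ≤ (dist xs (b i) + dist q (b i)) / 2 := by
      intro i
      have h1 : m - b i = (1/2 : ℝ) • (xs - b i) + (1/2 : ℝ) • (q - b i) := by
        rw [hmid]
        module
      rw [dist_eq_norm, dist_eq_norm, dist_eq_norm, h1]
      calc ‖(1/2 : ℝ) • (xs - b i) + (1/2 : ℝ) • (q - b i)‖
          ≤ ‖(1/2 : ℝ) • (xs - b i)‖ + ‖(1/2 : ℝ) • (q - b i)‖ := norm_add_le _ _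
        _ = (‖xs - b i‖ + ‖q - b i‖) / 2 := by
            rw [norm_smul, norm_smul]
            simp [Real.norm_eq_abs]
            ring
    have hsum : ∑ i : Fin 3, dist m (b i) = ∑ i : Fin 3, (dist xs (b i) + dist q (b i)) / 2 := by
      have h0 : ∑ i : Fin 3, (dist xs (b i) + dist q (b i)) / 2
          = (∑ i : Fin 3, dist xs (b i) + ∑ i : Fin 3, dist q (b i)) / 2 := by
        rw [← Finset.sum_add_distrib, Finset.sum_div]
      rw [hFme, h0, hFqe]
      ring
    have hmideq : ∀ i : Fin 3, dist m (b i) = (dist xs (b i) + dist q (b i)) / 2 := by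
      intro i
      have := (Finset.sum_eq_sum_iff_of_le (fun i _ => hmidle i)).1 hsum i (Finset.mem_univ i)
      exact this
    -- derive SameRay
    have hxsne : ∀ i, xs - b i ≠ 0 := fun i => by
      have := hyxs i; have := hs i
      rw [← norm_pos_iff]
      rw [← dist_eq_norm]
      linarith
    have hqne : ∀ i, q - b i ≠ 0 := fun i => by
      have := hyq i; have := hs i
      rw [← norm_pos_iff, ← dist_eq_norm]
      linarith
    have hray : ∀ i, ∃ c : ℝ, 0 < c ∧ c • (xs - b i) = q - b i := by
      intro i
      have heq := hmideq i
      have h1 : m - b i = (1/2 : ℝ) • ((xs - b i) + (q - b i)) := by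
        rw [hmid]
        module
      have h2 : ‖(xs - b i) + (q - b i)‖ = ‖xs - b i‖ + ‖q - b i‖ := by
        have h3 : dist m (b i) = ‖(1/2 : ℝ) • ((xs - b i) + (q - b i))‖ := by
          rw [dist_eq_norm, h1]
        rw [norm_smul, Real.norm_eq_abs] at h3
        simp only [dist_eq_norm] at heq h3
        rw [heq] at h3
        have habs : |(1/2 : ℝ)| = 1/2 := by norm_num
        rw [habs] at h3
        linarith
      have hsr : SameRay ℝ (xs - b i) (q - b i) := sameRay_iff_norm_add.2 h2
      exact hsr.exists_pos_left (hxsne i) (hqne i)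
    -- extract scalars
    have hqxs : q - xs = t • v := by rw [hqdef]; abel
    have hqxsne : q - xs ≠ 0 := by
      rw [hqxs]
      exact smul_ne_zero htpos.ne' hvne
    choose c hcpos hceq using hray
    have hcne1 : ∀ i, c i ≠ 1 := by
      intro i h1
      apply hqxsne
      have := hceq i
      rw [h1, one_smul] at this
      have : q - xs = 0 := by
        have h2 : q - b i - (xs - b i) = q - xs := by abel
        rw [← h2, this, sub_self]
      exact this
    -- xs - b i = (c i - 1)⁻¹ • (q - xs)
    have hlam : ∀ i, xs - b i = (c i - 1)⁻¹ • (q - xs) := by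
      intro i
      have h1 : q - xs = (c i - 1) • (xs - b i) := by
        rw [sub_smul, one_smul, hceq i]
        abel
      rw [h1, smul_smul, inv_mul_cancel₀ (sub_ne_zero.2 (hcne1 i)), one_smul]
    -- norms
    have hterm : ∀ i, ‖xs - b i‖ - ‖q - b i‖ =
        -(|(c i - 1)⁻¹| / (c i - 1)⁻¹) * ‖q - xs‖ := by
      intro i
      have h1 : ‖xs - b i‖ = |(c i - 1)⁻¹| * ‖q - xs‖ := by
        rw [hlam i, norm_smul, Real.norm_eq_abs]
      have h2 : ‖q - b i‖ = c i * ‖xs - b i‖ := by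
        rw [← hceq i, norm_smul, Real.norm_eq_abs, abs_of_pos (hcpos i)]
      rw [h1, h2, h1]
      have hcne : c i - 1 ≠ 0 := sub_ne_zero.2 (hcne1 i)
      have hinv : (c i - 1)⁻¹ ≠ 0 := inv_ne_zero hcne
      have h3 : (1 - c i) * |(c i - 1)⁻¹| = -(|(c i - 1)⁻¹| / (c i - 1)⁻¹) := by
        rcases (hcne1 i).lt_or_gt with h | h
        · have hl : (c i - 1)⁻¹ < 0 := inv_lt_zero.2 (by linarith)
          rw [abs_of_neg hl, neg_div, div_self hinv, neg_neg]
          have : (1 - c i) * -(c i - 1)⁻¹ = (1 - c i) * (1 - c i)⁻¹ := by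
            rw [show -(c i - 1)⁻¹ = (-(c i - 1))⁻¹ by rw [inv_neg], show -(c i - 1) = 1 - c i by ring]
          rw [this, mul_inv_cancel₀ (by linarith : (1 : ℝ) - c i ≠ 0)]
        · have hl : (0 : ℝ) < (c i - 1)⁻¹ := inv_pos.2 (by linarith)
          rw [abs_of_pos hl, div_self hinv]
          have : (1 - c i) * (c i - 1)⁻¹ = -((c i - 1) * (c i - 1)⁻¹) := by ring
          rw [this, mul_inv_cancel₀ hcne]
      linear_combination h3 * ‖q - xs‖
    have hw : 0 < ‖q - xs‖ := norm_pos_iff.2 hqxsne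
    have hsgn : ∀ i, |(c i - 1)⁻¹| / (c i - 1)⁻¹ = 1 ∨ |(c i - 1)⁻¹| / (c i - 1)⁻¹ = -1 := by
      intro i
      have hinv : (c i - 1)⁻¹ ≠ 0 := inv_ne_zero (sub_ne_zero.2 (hcne1 i))
      rcases hinv.lt_or_gt with h | h
      · right; rw [abs_of_neg h, neg_div, div_self hinv]
      · left; rw [abs_of_pos h, div_self hinv]
    have hsum0 : ∑ i : Fin 3, (‖xs - b i‖ - ‖q - b i‖) = 0 := by
      rw [Finset.sum_sub_distrib]
      simp only [← dist_eq_norm]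
      rw [hFqe]
      ring
    have hsum1 : ∑ i : Fin 3, (-(|(c i - 1)⁻¹| / (c i - 1)⁻¹) * ‖q - xs‖) = 0 := by
      rw [← hsum0]
      exact Finset.sum_congr rfl fun i _ => (hterm i).symm
    rw [Fin.sum_univ_three] at hsum1
    rcases hsgn 0 with h0 | h0 <;> rcases hsgn 1 with h1 | h1 <;> rcases hsgn 2 with h2 | h2 <;>
      rw [h0, h1, h2] at hsum1 <;> linarith [hw]
  · rintro rfl
    exact hmin
end

section
/- Let x* minimize H(x) = Σ_{i=1}^3 D(x;Θ_i) over ℝ², and suppose x* ∈ Θ_1 ∩ Θ_2 but x* ∉ Θ_3. Then x* lies on the boundary of Θ_1 ∩ Θ_2 (it cannot belong to the interior of Θ_1 ∩ Θ_2). -/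
open Metric

/-- Lower bound on the distance to a closed ball. -/
lemma infDist_closedBall_lower {E : Type*} [NormedAddCommGroup E] [ProperSpace E]
    (x b : E) {s : ℝ} (hs : 0 ≤ s) :
    dist x b - s ≤ Metric.infDist x (Metric.closedBall b s) := by
  obtain ⟨q, hq, hq2⟩ := (isCompact_closedBall b s).exists_infDist_eq_dist
    ⟨b, Metric.mem_closedBall_self hs⟩ x
  rw [hq2, sub_le_iff_le_add]
  calc dist x b ≤ dist x q + dist q b := dist_triangle _ _ _
  _ ≤ dist x q + s := by have := Metric.mem_closedBall.1 hq; linarith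

/-- Upper bound on the distance to a closed ball. -/
lemma infDist_closedBall_upper {E : Type*} [NormedAddCommGroup E] [NormedSpace ℝ E]
    (x b : E) {s : ℝ} (hs : 0 ≤ s) :
    Metric.infDist x (Metric.closedBall b s) ≤ max (dist x b - s) 0 := by
  rcases le_or_gt (dist x b) s with h | h
  · have : x ∈ Metric.closedBall b s := Metric.mem_closedBall.2 h
    rw [Metric.infDist_zero_of_mem this]
    exact le_max_right _ _
  · have hd : 0 < dist x b := lt_of_le_of_lt hs h
    set z : E := b + (s / dist x b) • (x - b) with hz
    have hzmem : z ∈ Metric.closedBall b s := by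
      simp only [Metric.mem_closedBall, hz, dist_eq_norm]
      rw [add_sub_cancel_left, norm_smul]
      rw [Real.norm_eq_abs, abs_of_nonneg (by positivity)]
      rw [div_mul_eq_mul_div, ← dist_eq_norm, dist_comm x b]
      rw [dist_comm b x, mul_div_cancel_right₀ _ hd.ne']
    have hdz : dist x z = dist x b - s := by
      rw [dist_eq_norm, hz]
      have : x - (b + (s / dist x b) • (x - b)) = (1 - s / dist x b) • (x - b) := by
        rw [sub_smul, one_smul]; abel
      rw [this, norm_smul, Real.norm_eq_abs]
      have h1 : (0:ℝ) ≤ 1 - s / dist x b := by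
        rw [sub_nonneg, div_le_one hd]; exact h.le
      rw [abs_of_nonneg h1, ← dist_eq_norm]
      field_simp
    calc Metric.infDist x (Metric.closedBall b s) ≤ dist x z :=
          Metric.infDist_le_dist_of_mem hzmem
    _ = dist x b - s := hdz
    _ ≤ max (dist x b - s) 0 := le_max_left _ _

/-- A minimizer lying in `Θ₁ ∩ Θ₂` but not in `Θ₃` must be on the boundary of `Θ₁ ∩ Θ₂`. -/
theorem fermat_torricelli_boundary_of_two
    (b : Fin 3 → EuclideanSpace ℝ (Fin 2)) (s : Fin 3 → ℝ) (hs : ∀ i, 0 ≤ s i)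
    (hb : Function.Injective b)
    (H : EuclideanSpace ℝ (Fin 2) → ℝ)
    (hH : ∀ x, H x = ∑ i : Fin 3, Metric.infDist x (Metric.closedBall (b i) (s i)))
    (xs : EuclideanSpace ℝ (Fin 2)) (hmin : ∀ x, H xs ≤ H x)
    (h1 : xs ∈ Metric.closedBall (b 0) (s 0)) (h2 : xs ∈ Metric.closedBall (b 1) (s 1))
    (h3 : xs ∉ Metric.closedBall (b 2) (s 2)) :
    xs ∈ frontier (Metric.closedBall (b 0) (s 0) ∩ Metric.closedBall (b 1) (s 1)) := by
  have hclosed : IsClosed (Metric.closedBall (b 0) (s 0) ∩ Metric.closedBall (b 1) (s 1)) :=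
    Metric.isClosed_closedBall.inter Metric.isClosed_closedBall
  rw [frontier, hclosed.closure_eq]
  refine ⟨⟨h1, h2⟩, fun hint => ?_⟩
  -- get an ε-ball around xs inside the intersection
  obtain ⟨ε, hε, hball⟩ := Metric.mem_nhds_iff.1 (mem_interior_iff_mem_nhds.1 hint)
  -- distance from xs to b 2 exceeds s 2
  have hd : s 2 < dist xs (b 2) := by
    by_contra h; exact h3 (Metric.mem_closedBall.2 (not_lt.1 h))
  have hd0 : 0 < dist xs (b 2) := lt_of_le_of_lt (hs 2) hd
  -- choose step size t
  set t : ℝ := min (ε / (2 * dist xs (b 2))) (1/2) with ht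
  have ht0 : 0 < t := lt_min (by positivity) (by norm_num)
  have ht1 : t < 1 := lt_of_le_of_lt (min_le_right _ _) (by norm_num)
  set y : EuclideanSpace ℝ (Fin 2) := xs + t • (b 2 - xs) with hy
  have hyx : dist y xs = t * dist xs (b 2) := by
    rw [hy, dist_eq_norm, add_sub_cancel_left, norm_smul, Real.norm_eq_abs,
      abs_of_pos ht0, ← dist_eq_norm, dist_comm]
  have hyε : dist y xs < ε := by
    rw [hyx]
    calc t * dist xs (b 2) ≤ (ε / (2 * dist xs (b 2))) * dist xs (b 2) := by
          apply mul_le_mul_of_nonneg_right (min_le_left _ _) hd0.le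
    _ = ε / 2 := by field_simp
    _ < ε := by linarith
  have hymem : y ∈ Metric.closedBall (b 0) (s 0) ∩ Metric.closedBall (b 1) (s 1) :=
    hball (Metric.mem_ball.2 hyε)
  have hyb2 : dist y (b 2) = (1 - t) * dist xs (b 2) := by
    rw [hy, dist_eq_norm]
    have : xs + t • (b 2 - xs) - b 2 = (1 - t) • (xs - b 2) := by
      rw [sub_smul, one_smul, smul_sub]
      module
    rw [this, norm_smul, Real.norm_eq_abs, abs_of_pos (by linarith), ← dist_eq_norm]
  -- compare H values
  have hHxs : H xs = Metric.infDist xs (Metric.closedBall (b 2) (s 2)) := by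
    rw [hH, Fin.sum_univ_three, Metric.infDist_zero_of_mem h1,
      Metric.infDist_zero_of_mem h2, zero_add, zero_add]
  have hHy : H y = Metric.infDist y (Metric.closedBall (b 2) (s 2)) := by
    rw [hH, Fin.sum_univ_three, Metric.infDist_zero_of_mem hymem.1,
      Metric.infDist_zero_of_mem hymem.2, zero_add, zero_add]
  have hlow : dist xs (b 2) - s 2 ≤ H xs := by
    rw [hHxs]; exact infDist_closedBall_lower xs (b 2) (hs 2)
  have hup : H y ≤ max ((1 - t) * dist xs (b 2) - s 2) 0 := by
    rw [hHy, ← hyb2]; exact infDist_closedBall_upper y (b 2) (hs 2)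
  have hlt : max ((1 - t) * dist xs (b 2) - s 2) 0 < dist xs (b 2) - s 2 := by
    apply max_lt
    · nlinarith
    · linarith
  exact absurd (hmin y) (not_le.2 (by linarith))
end
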